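/- A semimetric d on S_n satisfies Axiom A.1 if and only if there exists a symmetric function g : [n]² → ℝ₊ with g(i,i) = 0 for all i ∈ [n] such that for all σ, π ∈ S_n, d(σ,π) = Σ_{(i,j) ∈ I(σ,π)} g(i,j). -/

import Mathlib

open Finset

noncomputable section

/-- `i >_σ j`: candidate `i` is ranked above candidate `j` by `σ`
(where `σ i` is the candidate in position `i`). -/
def prefOver {n : ℕ} (σ : Equiv.Perm (Fin n)) (i j : Fin n) : Prop :=
  σ.symm i < σ.symm j

/-- `M(S,σ)`: the set of `>_σ`-maximal elements of `S` (a singleton when `S ≠ ∅`). -/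
def bestSet {n : ℕ} (σ : Equiv.Perm (Fin n)) (S : Finset (Fin n)) : Finset (Fin n) :=
  S.filter fun x => ∀ y ∈ S, σ.symm x ≤ σ.symm y

/-- `△_S(σ,π) = M(S,σ) △ M(S,π)`. -/
def topDiff {n : ℕ} (σ π : Equiv.Perm (Fin n)) (S : Finset (Fin n)) : Finset (Fin n) :=
  symmDiff (bestSet σ S) (bestSet π S)

/-- The `(β,μ)`-top-difference distance; `β i` is the weight of menus of size `i+2`. -/
def dTD (n : ℕ) (β : Fin (n - 1) → ℝ) (μ : Fin n → ℝ)
    (σ π : Equiv.Perm (Fin n)) : ℝ :=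
  ∑ S ∈ Finset.univ.filter (fun S : Finset (Fin n) => 2 ≤ S.card),
    (if h : S.card - 2 < n - 1 then β ⟨S.card - 2, h⟩ else 0) *
      ∑ x ∈ topDiff σ π S, μ x

def IsSemimetric {α : Type*} (d : α → α → ℝ) : Prop :=
  (∀ x y, 0 ≤ d x y) ∧ (∀ x y, d x y = d y x) ∧ (∀ x, d x x = 0) ∧
    (∀ x y z, d x z ≤ d x y + d y z)

def IsMetricFn {α : Type*} (d : α → α → ℝ) : Prop :=
  IsSemimetric d ∧ ∀ x y, d x y = 0 → x = y

/-- `ω` is between `σ` and `π`: whenever `σ` and `π` agree on a pair, so does `ω`. -/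
def Between {n : ℕ} (σ ω π : Equiv.Perm (Fin n)) : Prop :=
  ∀ i j : Fin n, i ≠ j →
    (σ.symm i < σ.symm j ∧ π.symm i < π.symm j) → ω.symm i < ω.symm j

/-- The inversion set `I(σ,π) = {(i,j) : i >_σ j and i <_π j}`. -/
def inversions {n : ℕ} (σ π : Equiv.Perm (Fin n)) : Finset (Fin n × Fin n) :=
  Finset.univ.filter fun p => σ.symm p.1 < σ.symm p.2 ∧ π.symm p.2 < π.symm p.1

/-- Axiom A.1. -/
def AxA1 {n : ℕ} (d : Equiv.Perm (Fin n) → Equiv.Perm (Fin n) → ℝ) : Prop :=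
  ∀ σ ω π : Equiv.Perm (Fin n), Between σ ω π → d π σ = d π ω + d ω σ

namespace Stmt5Aux

variable {n : ℕ}

lemma mem_inversions {σ π : Equiv.Perm (Fin n)} {p : Fin n × Fin n} :
    p ∈ inversions σ π ↔ σ.symm p.1 < σ.symm p.2 ∧ π.symm p.2 < π.symm p.1 := by
  simp [inversions]

/-- `σ` and `τ` differ exactly on the pair `{a,b}`, with `a` above `b` in `σ`. -/
def AdjPair (a b : Fin n) (σ τ : Equiv.Perm (Fin n)) : Prop :=
  σ.symm a < σ.symm b ∧ τ.symm b < τ.symm a ∧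
    ∀ x y : Fin n, ¬(x = a ∧ y = b) → ¬(x = b ∧ y = a) →
      (σ.symm x < σ.symm y ↔ τ.symm x < τ.symm y)

lemma AdjPair.flip {a b : Fin n} {σ τ : Equiv.Perm (Fin n)}
    (h : AdjPair a b σ τ) : AdjPair b a τ σ := by
  refine ⟨h.2.1, h.1, fun x y hx hy => ?_⟩
  exact (h.2.2 x y hy hx).symm

lemma AdjPair.between {a b : Fin n} {σ τ ρ : Equiv.Perm (Fin n)}
    (h : AdjPair a b σ τ) (hρ : ρ.symm b < ρ.symm a) : Between σ τ ρ := by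
  intro i j hij ⟨h1, h2⟩
  have hab : ¬(i = a ∧ j = b) := by
    rintro ⟨rfl, rfl⟩; exact absurd h2 (not_lt.2 hρ.le)
  have hba : ¬(i = b ∧ j = a) := by
    rintro ⟨rfl, rfl⟩; exact absurd h1 (not_lt.2 h.1.le)
  exact (h.2.2 i j hab hba).1 h1

lemma indep {d : Equiv.Perm (Fin n) → Equiv.Perm (Fin n) → ℝ}
    (hs : ∀ x y, d x y = d y x) (hA : AxA1 d)
    {a b : Fin n} {σ τ σ' τ' : Equiv.Perm (Fin n)}
    (h1 : AdjPair a b σ τ) (h2 : AdjPair a b σ' τ') : d σ τ = d σ' τ' := by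
  have e1 := hA τ' σ' σ (h2.flip.between h1.1)
  have e2 := hA σ' τ' τ (h2.between h1.2.1)
  have e3 := hA τ σ σ' (h1.flip.between h2.1)
  have e4 := hA σ τ τ' (h1.between h2.2.1)
  -- e1 : d σ τ' = d σ σ' + d σ' τ'
  -- e2 : d τ σ' = d τ τ' + d τ' σ'
  -- e3 : d σ' τ = d σ' σ + d σ τ
  -- e4 : d τ' σ = d τ' τ + d τ σ
  linarith [hs σ τ', hs τ σ', hs σ σ', hs τ τ', hs σ τ, hs σ' τ']

lemma symm_swap_mul (a b : Fin n) (σ : Equiv.Perm (Fin n)) (x : Fin n) :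
    (Equiv.swap a b * σ).symm x = σ.symm (Equiv.swap a b x) := by
  simp [Equiv.Perm.mul_def, Equiv.symm_trans_apply]

lemma adjPair_swap {a b : Fin n} {σ : Equiv.Perm (Fin n)}
    (hab : (σ.symm b : ℕ) = (σ.symm a : ℕ) + 1) :
    AdjPair a b σ (Equiv.swap a b * σ) := by
  have hne : a ≠ b := by
    intro h; rw [h] at hab; omega
  have hinj : ∀ x y : Fin n, σ.symm x = σ.symm y ↔ x = y := by
    intro x y; exact (Equiv.apply_eq_iff_eq _)
  have vne : ∀ z w : Fin n, z ≠ w → (σ.symm z : ℕ) ≠ (σ.symm w : ℕ) :=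
    fun z w h hh => h ((hinj z w).1 (Fin.val_injective hh))
  refine ⟨?_, ?_, ?_⟩
  · rw [Fin.lt_def]; omega
  · rw [Fin.lt_def, symm_swap_mul, symm_swap_mul, Equiv.swap_apply_left,
      Equiv.swap_apply_right]; omega
  · intro x y hx hy
    rw [symm_swap_mul, symm_swap_mul, Fin.lt_def, Fin.lt_def]
    rcases eq_or_ne x a with rfl | hxa
    · rcases eq_or_ne y x with rfl | hyx
      · simp
      · have hyb : y ≠ b := fun h => hx ⟨rfl, h⟩
        rw [Equiv.swap_apply_left, Equiv.swap_apply_of_ne_of_ne hyx hyb]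
        have h1 := vne y x hyx
        have h2 := vne y b hyb
        omega
    · rcases eq_or_ne x b with rfl | hxb
      · rcases eq_or_ne y x with rfl | hyx
        · simp
        · have hya : y ≠ a := fun h => hy ⟨rfl, h⟩
          rw [Equiv.swap_apply_right, Equiv.swap_apply_of_ne_of_ne hya hyx]
          have h1 := vne y x hyx
          have h2 := vne y a hya
          omega
      · rw [Equiv.swap_apply_of_ne_of_ne hxa hxb]
        rcases eq_or_ne y a with rfl | hya
        · rw [Equiv.swap_apply_left]
          have h1 := vne x y hxa
          have h2 := vne x b hxb
          omega
        · rcases eq_or_ne y b with rfl | hyb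
          · rw [Equiv.swap_apply_right]
            have h1 := vne x y hxb
            have h2 := vne x a hxa
            omega
          · rw [Equiv.swap_apply_of_ne_of_ne hya hyb]

lemma inversions_erase {a b : Fin n} {σ ω π : Equiv.Perm (Fin n)}
    (h : AdjPair a b σ ω) (hπ : π.symm b < π.symm a) :
    inversions ω π = (inversions σ π).erase (a, b) := by
  ext ⟨x, y⟩
  rw [Finset.mem_erase, mem_inversions, mem_inversions]
  by_cases hab : x = a ∧ y = b
  · obtain ⟨rfl, rfl⟩ := hab
    constructor
    · rintro ⟨h1, -⟩; exact absurd h.2.1 (not_lt.2 h1.le)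
    · rintro ⟨hne2, -⟩; exact absurd rfl hne2
  · by_cases hba : x = b ∧ y = a
    · obtain ⟨rfl, rfl⟩ := hba
      constructor
      · rintro ⟨-, h2⟩; exact absurd hπ (not_lt.2 h2.le)
      · rintro ⟨-, h1, -⟩; exact absurd h.1 (not_lt.2 h1.le)
    · rw [← h.2.2 x y hab hba]
      constructor
      · rintro ⟨h1, h2⟩
        refine ⟨?_, h1, h2⟩
        exact fun hc => hab ⟨congrArg Prod.fst hc, congrArg Prod.snd hc⟩
      · rintro ⟨-, hh⟩; exact hh

lemma exists_adj {σ π : Equiv.Perm (Fin n)} (hne : (inversions σ π).Nonempty) :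
    ∃ a b : Fin n, (σ.symm b : ℕ) = (σ.symm a : ℕ) + 1 ∧ (a, b) ∈ inversions σ π := by
  obtain ⟨⟨i, j⟩, hij⟩ := hne
  rw [mem_inversions] at hij
  by_contra hcon
  push_neg at hcon
  rcases n with - | m
  · exact i.elim0
  · have hmono : StrictMono (fun k => π.symm (σ k)) := by
      rw [Fin.strictMono_iff_lt_succ]
      intro k
      set a := σ k.castSucc with ha
      set b := σ k.succ with hb
      have hsa : σ.symm a = k.castSucc := by rw [ha]; simp
      have hsb : σ.symm b = k.succ := by rw [hb]; simp
      have hadj : (σ.symm b : ℕ) = (σ.symm a : ℕ) + 1 := by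
        rw [hsa, hsb]; simp
      have hmem := hcon a b hadj
      rw [mem_inversions] at hmem
      push_neg at hmem
      have hlt : σ.symm a < σ.symm b := by rw [Fin.lt_def]; omega
      have h2 := hmem hlt
      have hab : a ≠ b := by
        intro hh; rw [hh] at hadj; omega
      have : π.symm a ≠ π.symm b := fun hh => hab (π.symm.injective hh)
      exact lt_of_le_of_ne h2 this
    have h1 : σ.symm i < σ.symm j := hij.1
    have := hmono h1
    simp only [Equiv.apply_symm_apply] at this
    exact absurd hij.2 (not_lt.2 this.le)

lemma eq_of_inversions_empty {σ π : Equiv.Perm (Fin n)}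
    (h : inversions σ π = ∅) : σ = π := by
  have hmono : StrictMono (fun k => π.symm (σ k)) := by
    intro k l hkl
    set i := σ k with hi
    set j := σ l with hj
    have hsi : σ.symm i = k := by rw [hi]; simp
    have hsj : σ.symm j = l := by rw [hj]; simp
    have hij : i ≠ j := fun hh => absurd (hsi ▸ hsj ▸ congrArg σ.symm hh) (ne_of_lt hkl)
    have hnmem : (i, j) ∉ inversions σ π := by rw [h]; exact Finset.notMem_empty _
    rw [mem_inversions] at hnmem
    push_neg at hnmem
    have := hnmem (by rw [hsi, hsj]; exact hkl)
    exact lt_of_le_of_ne this (fun hh => hij (π.symm.injective hh))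
  have hsurj : Function.Surjective (fun k => π.symm (σ k)) :=
    π.symm.surjective.comp σ.surjective
  have hrange : Set.range (fun k => π.symm (σ k)) = Set.range (id : Fin n → Fin n) := by
    rw [Set.range_id, hsurj.range_eq]
  have heq := (hmono.range_inj strictMono_id).1 hrange
  ext x
  have hx := congrFun heq x
  simp only [id_eq] at hx
  exact congrArg Fin.val (by simpa using congrArg π hx)

/-- A canonical permutation placing `a` in position 0 and `b` in position 1. -/
def basePerm (hn : 2 ≤ n) (a b : Fin n) : Equiv.Perm (Fin n) :=
  (Equiv.swap (⟨1, by omega⟩ : Fin n) (Equiv.swap (⟨0, by omega⟩ : Fin n) a b)).trans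
    (Equiv.swap (⟨0, by omega⟩ : Fin n) a)

lemma basePerm_zero (hn : 2 ≤ n) {a b : Fin n} (hab : a ≠ b) :
    basePerm hn a b ⟨0, by omega⟩ = a := by
  have h01 : (⟨0, by omega⟩ : Fin n) ≠ ⟨1, by omega⟩ := by
    intro h; exact absurd (congrArg Fin.val h) (by simp)
  have hc : Equiv.swap (⟨0, by omega⟩ : Fin n) a b ≠ ⟨0, by omega⟩ := by
    intro h
    have := congrArg (Equiv.swap (⟨0, by omega⟩ : Fin n) a) h
    rw [Equiv.swap_apply_self, Equiv.swap_apply_left] at this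
    exact hab this.symm
  simp only [basePerm, Equiv.trans_apply]
  rw [Equiv.swap_apply_of_ne_of_ne h01 (Ne.symm (Ne.symm hc).symm), Equiv.swap_apply_left]

lemma basePerm_one (hn : 2 ≤ n) (a b : Fin n) :
    basePerm hn a b ⟨1, by omega⟩ = b := by
  simp only [basePerm, Equiv.trans_apply]
  rw [Equiv.swap_apply_left, Equiv.swap_apply_self]

lemma basePerm_adj (hn : 2 ≤ n) {a b : Fin n} (hab : a ≠ b) :
    (((basePerm hn a b).symm b : Fin n) : ℕ) = (((basePerm hn a b).symm a : Fin n) : ℕ) + 1 := by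
  have h0 : (basePerm hn a b).symm a = ⟨0, by omega⟩ :=
    (Equiv.symm_apply_eq _).2 (basePerm_zero hn hab).symm
  have h1 : (basePerm hn a b).symm b = ⟨1, by omega⟩ :=
    (Equiv.symm_apply_eq _).2 (basePerm_one hn a b).symm
  rw [h0, h1]

/-- For the easy direction: the inversion set decomposes along a between permutation. -/
lemma inversions_union {σ ω π : Equiv.Perm (Fin n)} (hbet : Between σ ω π) :
    inversions π σ = inversions π ω ∪ inversions ω σ ∧
      Disjoint (inversions π ω) (inversions ω σ) := by
  constructor
  · ext ⟨i, j⟩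
    simp only [Finset.mem_union, mem_inversions]
    constructor
    · rintro ⟨h1, h2⟩
      rcases lt_or_gt_of_ne (fun hh : ω.symm i = ω.symm j =>
        (ne_of_gt h2) (congrArg σ.symm (by
          simpa using congrArg ω hh) ▸ rfl)) with hw | hw
      · exact Or.inr ⟨hw, h2⟩
      · exact Or.inl ⟨h1, hw⟩
    · rintro (⟨h1, h2⟩ | ⟨h1, h2⟩)
      · refine ⟨h1, ?_⟩
        by_contra hcon
        have hij : i ≠ j := fun hh => (ne_of_gt h2) (by rw [hh])
        have : σ.symm i < σ.symm j :=
          lt_of_le_of_ne (not_lt.1 hcon) (fun hh => hij (σ.symm.injective hh))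
        exact absurd (hbet i j hij ⟨this, h1⟩) (not_lt.2 h2.le)
      · refine ⟨?_, h2⟩
        by_contra hcon
        have hij : i ≠ j := fun hh => (ne_of_gt h1) (by rw [hh])
        have : π.symm j < π.symm i :=
          lt_of_le_of_ne (not_lt.1 hcon) (fun hh => hij.symm (π.symm.injective hh))
        exact absurd (hbet j i hij.symm ⟨h2, this⟩) (not_lt.2 h1.le)
  · rw [Finset.disjoint_left]
    rintro ⟨i, j⟩ h1 h2
    rw [mem_inversions] at h1 h2
    exact absurd h2.1 (not_lt.2 h1.2.le)

end Stmt5Aux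

theorem stmt5 (n : ℕ) (hn : 2 ≤ n)
    (d : Equiv.Perm (Fin n) → Equiv.Perm (Fin n) → ℝ) (hd : IsSemimetric d) :
    AxA1 d ↔
      ∃ g : Fin n → Fin n → ℝ,
        (∀ i j, 0 ≤ g i j) ∧ (∀ i j, g i j = g j i) ∧ (∀ i, g i i = 0) ∧
          ∀ σ π : Equiv.Perm (Fin n), d σ π = ∑ p ∈ inversions σ π, g p.1 p.2 := by
  obtain ⟨hpos, hsym, hrefl, htri⟩ := hd
  constructor
  · intro hA
    set g : Fin n → Fin n → ℝ := fun a b =>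
      if a = b then 0 else
        d (Stmt5Aux.basePerm hn a b) (Equiv.swap a b * Stmt5Aux.basePerm hn a b) with hg
    have gval : ∀ (a b : Fin n) (σ τ : Equiv.Perm (Fin n)),
        Stmt5Aux.AdjPair a b σ τ → d σ τ = g a b := by
      intro a b σ τ h
      have hab : a ≠ b := fun hh => absurd (hh ▸ h.1) (lt_irrefl _)
      have hbase : Stmt5Aux.AdjPair a b (Stmt5Aux.basePerm hn a b)
          (Equiv.swap a b * Stmt5Aux.basePerm hn a b) :=
        Stmt5Aux.adjPair_swap (Stmt5Aux.basePerm_adj hn hab)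
      have := Stmt5Aux.indep hsym hA h hbase
      rw [this, hg]
      simp only [if_neg hab]
    refine ⟨g, ?_, ?_, ?_, ?_⟩
    · intro i j
      by_cases h : i = j
      · simp [hg, h]
      · simp only [hg, if_neg h]
        exact hpos _ _
    · intro i j
      by_cases h : i = j
      · rw [h]
      · have h1 := gval i j _ _
          ((Stmt5Aux.adjPair_swap (Stmt5Aux.basePerm_adj hn (Ne.symm h))).flip)
        calc g i j
            = d (Equiv.swap j i * Stmt5Aux.basePerm hn j i) (Stmt5Aux.basePerm hn j i) :=
              h1.symm
          _ = d (Stmt5Aux.basePerm hn j i) (Equiv.swap j i * Stmt5Aux.basePerm hn j i) :=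
              hsym _ _
          _ = g j i := by rw [hg]; simp only [if_neg (Ne.symm h)]
    · intro i; simp [hg]
    · have main : ∀ (N : ℕ) (σ π : Equiv.Perm (Fin n)), (inversions σ π).card = N →
          d σ π = ∑ p ∈ inversions σ π, g p.1 p.2 := by
        intro N
        induction N using Nat.strong_induction_on with
        | _ N ih =>
          intro σ π hcard
          rcases Finset.eq_empty_or_nonempty (inversions σ π) with hemp | hne
          · rw [hemp, Finset.sum_empty, Stmt5Aux.eq_of_inversions_empty hemp, hrefl]
          · obtain ⟨a, b, hadj, hmem⟩ := Stmt5Aux.exists_adj hne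
            set ω := Equiv.swap a b * σ with hω
            have hAdj : Stmt5Aux.AdjPair a b σ ω := Stmt5Aux.adjPair_swap hadj
            have hmem' := Stmt5Aux.mem_inversions.1 hmem
            have hbet : Between π ω σ := by
              intro i j hij hh
              obtain ⟨h1, h2⟩ := hh
              have hab' : ¬(i = a ∧ j = b) := by
                rintro ⟨rfl, rfl⟩; exact absurd h1 (not_lt.2 hmem'.2.le)
              have hba' : ¬(i = b ∧ j = a) := by
                rintro ⟨rfl, rfl⟩; exact absurd h2 (not_lt.2 hAdj.1.le)
              exact (hAdj.2.2 i j hab' hba').1 h2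
            have heq := hA π ω σ hbet
            have herase := Stmt5Aux.inversions_erase hAdj hmem'.2
            have hpos' : 0 < N := by
              rw [← hcard]; exact Finset.card_pos.2 hne
            have hcard' : (inversions ω π).card < N := by
              rw [herase, Finset.card_erase_of_mem hmem, hcard]
              omega
            have hind := ih _ hcard' ω π rfl
            have hgab : d σ ω = g a b := gval a b σ ω hAdj
            rw [heq, hgab, hind, herase]
            exact Finset.add_sum_erase _ (fun p => g p.1 p.2) hmem
      exact fun σ π => main _ σ π rfl
  · rintro ⟨g, hg0, hgs, hgd, hgf⟩ σ ω π hbet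
    obtain ⟨hunion, hdisj⟩ := Stmt5Aux.inversions_union hbet
    rw [hgf, hgf, hgf, hunion, Finset.sum_union hdisj]
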